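/- Let K be a field and I = (x_1^2 x_2, x_2^2 x_3, x_1 x_3^2) ⊆ K[x_1, x_2, x_3]. Every polynomial in I that is a product of three linear forms is a scalar multiple of one of the three generators x_1^2 x_2, x_2^2 x_3, x_1 x_3^2. -/

import Mathlib

open MvPolynomial
set_option maxHeartbeats 1600000

lemma degsum3 (m : Fin 3 →₀ ℕ) : Finsupp.degree m = m 0 + m 1 + m 2 := by
  rw [Finsupp.degree_apply]
  rw [Finset.sum_subset (Finset.subset_univ m.support) (by intro x _ h; simpa using h)]
  simp [Fin.sum_univ_three]

lemma lin3 {K : Type*} [Field K] {l : MvPolynomial (Fin 3) K} (hl : l.IsHomogeneous 1) :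
    ∃ a b c : K, l = C a * X 0 + C b * X 1 + C c * X 2 := by
  refine ⟨coeff (Finsupp.single 0 1) l, coeff (Finsupp.single 1 1) l,
    coeff (Finsupp.single 2 1) l, ?_⟩
  apply MvPolynomial.ext
  intro m
  rw [coeff_add, coeff_add, coeff_C_mul, coeff_C_mul, coeff_C_mul, coeff_X', coeff_X', coeff_X']
  by_cases h : Finsupp.degree m = 1
  · have h3 : m 0 + m 1 + m 2 = 1 := by rw [← degsum3 m]; exact h
    have hm : (m 0 = 1 ∧ m 1 = 0 ∧ m 2 = 0) ∨ (m 0 = 0 ∧ m 1 = 1 ∧ m 2 = 0) ∨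
        (m 0 = 0 ∧ m 1 = 0 ∧ m 2 = 1) := by omega
    have hsingle : m = Finsupp.single 0 1 ∨ m = Finsupp.single 1 1 ∨ m = Finsupp.single 2 1 := by
      rcases hm with ⟨p0, p1, p2⟩ | ⟨p0, p1, p2⟩ | ⟨p0, p1, p2⟩
      · left; ext j; fin_cases j <;> simp [Finsupp.single_apply, p0, p1, p2]
      · right; left; ext j; fin_cases j <;> simp [Finsupp.single_apply, p0, p1, p2]
      · right; right; ext j; fin_cases j <;> simp [Finsupp.single_apply, p0, p1, p2]
    rcases hsingle with rfl | rfl | rfl <;>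
      simp [Finsupp.single_eq_single_iff]
  · have h0 : coeff m l = 0 := hl.coeff_eq_zero h
    have hne : ∀ i : Fin 3, Finsupp.single i 1 ≠ m := by
      intro i hi
      apply h
      rw [← hi, degsum3]
      fin_cases i <;> simp [Finsupp.single_apply]
    rw [h0, if_neg (hne 0), if_neg (hne 1), if_neg (hne 2)]
    ring

lemma keyAB {K : Type*} [Field K] (a₁ a₂ a₃ b₁ b₂ b₃ c₁ c₂ c₃ : K)
    (h1 : a₁ * a₂ * a₃ = 0) (h2 : b₁ * b₂ * b₃ = 0)
    (h5 : a₁ * b₂ * b₃ + b₁ * a₂ * b₃ + b₁ * b₂ * a₃ = 0) :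
    (a₁ * a₂ * b₃ + a₁ * b₂ * a₃ + b₁ * a₂ * a₃) *
      (b₁ * b₂ * c₃ + b₁ * c₂ * b₃ + c₁ * b₂ * b₃) = 0 := by
  rcases mul_eq_zero.mp h1 with hh | ha₃
  · rcases mul_eq_zero.mp hh with ha₁ | ha₂
    · subst ha₁
      rcases mul_eq_zero.mp h2 with hh2 | hb₃
      · rcases mul_eq_zero.mp hh2 with hb₁ | hb₂
        · subst hb₁; ring
        · subst hb₂; linear_combination (b₁ * a₃ * c₂) * h5
      · subst hb₃; linear_combination (b₁ * a₂ * c₃) * h5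
    · subst ha₂
      rcases mul_eq_zero.mp h2 with hh2 | hb₃
      · rcases mul_eq_zero.mp hh2 with hb₁ | hb₂
        · subst hb₁; linear_combination (a₃ * b₂ * c₁) * h5
        · subst hb₂; ring
      · subst hb₃; linear_combination (a₁ * b₂ * c₃) * h5
  · subst ha₃
    rcases mul_eq_zero.mp h2 with hh2 | hb₃
    · rcases mul_eq_zero.mp hh2 with hb₁ | hb₂
      · subst hb₁; linear_combination (a₂ * b₃ * c₁) * h5
      · subst hb₂; linear_combination (a₁ * b₃ * c₂) * h5
    · subst hb₃; ring

lemma nle3 (d m : Fin 3 →₀ ℕ) (i : Fin 3) (h : m i < d i) : ¬ d ≤ m :=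
  fun hle => absurd (Finsupp.le_def.mp hle i) (not_le.mpr h)

theorem stmt10 {K : Type*} [Field K] (p : MvPolynomial (Fin 3) K)
    (hp : p ∈ Ideal.span {(X 0) ^ 2 * X 1, (X 1) ^ 2 * X 2, X 0 * (X 2) ^ 2})
    (hprod : ∃ l₁ l₂ l₃ : MvPolynomial (Fin 3) K,
      l₁.IsHomogeneous 1 ∧ l₂.IsHomogeneous 1 ∧ l₃.IsHomogeneous 1 ∧ p = l₁ * l₂ * l₃) :
    ∃ c : K, p = c • ((X 0) ^ 2 * X 1) ∨ p = c • ((X 1) ^ 2 * X 2) ∨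
      p = c • (X 0 * (X 2) ^ 2) := by
  obtain ⟨l₁, l₂, l₃, hl₁, hl₂, hl₃, hpeq⟩ := hprod
  obtain ⟨a₁, b₁, c₁, e1⟩ := lin3 hl₁
  obtain ⟨a₂, b₂, c₂, e2⟩ := lin3 hl₂
  obtain ⟨a₃, b₃, c₃, e3⟩ := lin3 hl₃
  -- monomial forms of the generators
  have hg1 : ((X 0) ^ 2 * X 1 : MvPolynomial (Fin 3) K) =
      monomial (Finsupp.single 0 2 + Finsupp.single 1 1) 1 := by
    simp [X, monomial_pow, monomial_mul]
  have hg2 : ((X 1) ^ 2 * X 2 : MvPolynomial (Fin 3) K) =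
      monomial (Finsupp.single 1 2 + Finsupp.single 2 1) 1 := by
    simp [X, monomial_pow, monomial_mul]
  have hg3 : (X 0 * (X 2) ^ 2 : MvPolynomial (Fin 3) K) =
      monomial (Finsupp.single 0 1 + Finsupp.single 2 2) 1 := by
    simp [X, monomial_pow, monomial_mul]
  -- representation from ideal membership
  obtain ⟨q₁, z₁, hz₁, hrep1⟩ := Ideal.mem_span_insert.mp hp
  obtain ⟨q₂, z₂, hz₂, hrep2⟩ := Ideal.mem_span_insert.mp hz₁
  obtain ⟨q₃, hrep3⟩ := Ideal.mem_span_singleton'.mp hz₂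
  have hrep : p = q₁ * monomial (Finsupp.single 0 2 + Finsupp.single 1 1) 1 +
      (q₂ * monomial (Finsupp.single 1 2 + Finsupp.single 2 1) 1 +
       q₃ * monomial (Finsupp.single 0 1 + Finsupp.single 2 2) 1) := by
    rw [← hg1, ← hg2, ← hg3, hrep1, hrep2, ← hrep3]
  -- every "bad" monomial has zero coefficient in p
  have badcoeff : ∀ m : Fin 3 →₀ ℕ,
      ¬ (Finsupp.single 0 2 + Finsupp.single 1 1) ≤ m →
      ¬ (Finsupp.single 1 2 + Finsupp.single 2 1) ≤ m →
      ¬ (Finsupp.single 0 1 + Finsupp.single 2 2) ≤ m →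
      coeff m p = 0 := by
    intro m hm1 hm2 hm3
    rw [hrep, coeff_add, coeff_add, coeff_mul_monomial', coeff_mul_monomial',
      coeff_mul_monomial', if_neg hm1, if_neg hm2, if_neg hm3]
    ring
  -- expansion of the product of linear forms
  have hexp : l₁ * l₂ * l₃ =
      C (a₁ * a₂ * a₃) * ((X 0 : MvPolynomial (Fin 3) K) ^ 3) +
      C (a₁ * a₂ * b₃ + a₁ * b₂ * a₃ + b₁ * a₂ * a₃) * ((X 0) ^ 2 * X 1) +
      C (a₁ * a₂ * c₃ + a₁ * c₂ * a₃ + c₁ * a₂ * a₃) * ((X 0) ^ 2 * X 2) +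
      C (a₁ * b₂ * b₃ + b₁ * a₂ * b₃ + b₁ * b₂ * a₃) * (X 0 * (X 1) ^ 2) +
      C (a₁ * b₂ * c₃ + a₁ * c₂ * b₃ + b₁ * a₂ * c₃ + b₁ * c₂ * a₃ + c₁ * a₂ * b₃ +
         c₁ * b₂ * a₃) * (X 0 * X 1 * X 2) +
      C (a₁ * c₂ * c₃ + c₁ * a₂ * c₃ + c₁ * c₂ * a₃) * (X 0 * (X 2) ^ 2) +
      C (b₁ * b₂ * b₃) * ((X 1) ^ 3) +
      C (b₁ * b₂ * c₃ + b₁ * c₂ * b₃ + c₁ * b₂ * b₃) * ((X 1) ^ 2 * X 2) +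
      C (b₁ * c₂ * c₃ + c₁ * b₂ * c₃ + c₁ * c₂ * b₃) * (X 1 * (X 2) ^ 2) +
      C (c₁ * c₂ * c₃) * ((X 2) ^ 3) := by
    rw [e1, e2, e3]
    simp only [map_add, map_mul]
    ring
  -- names for the three relevant coefficients
  set A := a₁ * a₂ * b₃ + a₁ * b₂ * a₃ + b₁ * a₂ * a₃ with hAdef
  set B := b₁ * b₂ * c₃ + b₁ * c₂ * b₃ + c₁ * b₂ * b₃ with hBdef
  set Cc := a₁ * c₂ * c₃ + c₁ * a₂ * c₃ + c₁ * c₂ * a₃ with hCdef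
  have hm1 : ((X 0 : MvPolynomial (Fin 3) K) ^ 3) = monomial (Finsupp.single 0 3) 1 := by
    simp [X, monomial_pow]
  have hm2 : ((X 0 : MvPolynomial (Fin 3) K) ^ 2 * X 2) = monomial (Finsupp.single 0 2 + Finsupp.single 2 1) 1 := by
    simp [X, monomial_pow, monomial_mul]
  have hm3 : ((X 0 : MvPolynomial (Fin 3) K) * (X 1) ^ 2) = monomial (Finsupp.single 0 1 + Finsupp.single 1 2) 1 := by
    simp [X, monomial_pow, monomial_mul]
  have hm4 : ((X 0 : MvPolynomial (Fin 3) K) * X 1 * X 2) = monomial (Finsupp.single 0 1 + Finsupp.single 1 1 + Finsupp.single 2 1) 1 := by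
    simp [X, monomial_pow, monomial_mul]
  have hm5 : ((X 1 : MvPolynomial (Fin 3) K) ^ 3) = monomial (Finsupp.single 1 3) 1 := by
    simp [X, monomial_pow]
  have hm6 : ((X 1 : MvPolynomial (Fin 3) K) * (X 2) ^ 2) = monomial (Finsupp.single 1 1 + Finsupp.single 2 2) 1 := by
    simp [X, monomial_pow, monomial_mul]
  have hm7 : ((X 2 : MvPolynomial (Fin 3) K) ^ 3) = monomial (Finsupp.single 2 3) 1 := by
    simp [X, monomial_pow]
  have hexp2 := hexp
  rw [hm1, hm2, hm3, hm4, hm5, hm6, hm7, hg1, hg2, hg3] at hexp2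
  -- bad coefficient equations
  have h1 : a₁ * a₂ * a₃ = 0 := by
    have t := badcoeff (Finsupp.single 0 3)
      (nle3 _ _ 1 (by simp [Finsupp.add_apply, Finsupp.single_apply]))
      (nle3 _ _ 1 (by simp [Finsupp.add_apply, Finsupp.single_apply]))
      (nle3 _ _ 2 (by simp [Finsupp.add_apply, Finsupp.single_apply]))
    rw [hpeq, hexp2] at t
    simp only [coeff_add, coeff_C_mul, coeff_monomial] at t
    simp [Finsupp.ext_iff, Finsupp.add_apply, Finsupp.single_apply, Fin.forall_fin_succ, -mul_eq_zero] at t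
    linear_combination t
  have h2 : b₁ * b₂ * b₃ = 0 := by
    have t := badcoeff (Finsupp.single 1 3)
      (nle3 _ _ 0 (by simp [Finsupp.add_apply, Finsupp.single_apply]))
      (nle3 _ _ 2 (by simp [Finsupp.add_apply, Finsupp.single_apply]))
      (nle3 _ _ 0 (by simp [Finsupp.add_apply, Finsupp.single_apply]))
    rw [hpeq, hexp2] at t
    simp only [coeff_add, coeff_C_mul, coeff_monomial] at t
    simp [Finsupp.ext_iff, Finsupp.add_apply, Finsupp.single_apply, Fin.forall_fin_succ, -mul_eq_zero] at t
    linear_combination t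
  have h3 : c₁ * c₂ * c₃ = 0 := by
    have t := badcoeff (Finsupp.single 2 3)
      (nle3 _ _ 0 (by simp [Finsupp.add_apply, Finsupp.single_apply]))
      (nle3 _ _ 1 (by simp [Finsupp.add_apply, Finsupp.single_apply]))
      (nle3 _ _ 0 (by simp [Finsupp.add_apply, Finsupp.single_apply]))
    rw [hpeq, hexp2] at t
    simp only [coeff_add, coeff_C_mul, coeff_monomial] at t
    simp [Finsupp.ext_iff, Finsupp.add_apply, Finsupp.single_apply, Fin.forall_fin_succ, -mul_eq_zero] at t
    linear_combination t
  have h4 : a₁ * a₂ * c₃ + a₁ * c₂ * a₃ + c₁ * a₂ * a₃ = 0 := by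
    have t := badcoeff (Finsupp.single 0 2 + Finsupp.single 2 1)
      (nle3 _ _ 1 (by simp [Finsupp.add_apply, Finsupp.single_apply]))
      (nle3 _ _ 1 (by simp [Finsupp.add_apply, Finsupp.single_apply]))
      (nle3 _ _ 2 (by simp [Finsupp.add_apply, Finsupp.single_apply]))
    rw [hpeq, hexp2] at t
    simp only [coeff_add, coeff_C_mul, coeff_monomial] at t
    simp [Finsupp.ext_iff, Finsupp.add_apply, Finsupp.single_apply, Fin.forall_fin_succ, -mul_eq_zero] at t
    linear_combination t
  have h5 : a₁ * b₂ * b₃ + b₁ * a₂ * b₃ + b₁ * b₂ * a₃ = 0 := by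
    have t := badcoeff (Finsupp.single 0 1 + Finsupp.single 1 2)
      (nle3 _ _ 0 (by simp [Finsupp.add_apply, Finsupp.single_apply]))
      (nle3 _ _ 2 (by simp [Finsupp.add_apply, Finsupp.single_apply]))
      (nle3 _ _ 2 (by simp [Finsupp.add_apply, Finsupp.single_apply]))
    rw [hpeq, hexp2] at t
    simp only [coeff_add, coeff_C_mul, coeff_monomial] at t
    simp [Finsupp.ext_iff, Finsupp.add_apply, Finsupp.single_apply, Fin.forall_fin_succ, -mul_eq_zero] at t
    linear_combination t
  have h6 : b₁ * c₂ * c₃ + c₁ * b₂ * c₃ + c₁ * c₂ * b₃ = 0 := by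
    have t := badcoeff (Finsupp.single 1 1 + Finsupp.single 2 2)
      (nle3 _ _ 0 (by simp [Finsupp.add_apply, Finsupp.single_apply]))
      (nle3 _ _ 1 (by simp [Finsupp.add_apply, Finsupp.single_apply]))
      (nle3 _ _ 0 (by simp [Finsupp.add_apply, Finsupp.single_apply]))
    rw [hpeq, hexp2] at t
    simp only [coeff_add, coeff_C_mul, coeff_monomial] at t
    simp [Finsupp.ext_iff, Finsupp.add_apply, Finsupp.single_apply, Fin.forall_fin_succ, -mul_eq_zero] at t
    linear_combination t
  have h7 : a₁ * b₂ * c₃ + a₁ * c₂ * b₃ + b₁ * a₂ * c₃ + b₁ * c₂ * a₃ + c₁ * a₂ * b₃ +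
      c₁ * b₂ * a₃ = 0 := by
    have t := badcoeff (Finsupp.single 0 1 + Finsupp.single 1 1 + Finsupp.single 2 1)
      (nle3 _ _ 0 (by simp [Finsupp.add_apply, Finsupp.single_apply]))
      (nle3 _ _ 1 (by simp [Finsupp.add_apply, Finsupp.single_apply]))
      (nle3 _ _ 2 (by simp [Finsupp.add_apply, Finsupp.single_apply]))
    rw [hpeq, hexp2] at t
    simp only [coeff_add, coeff_C_mul, coeff_monomial] at t
    simp [Finsupp.ext_iff, Finsupp.add_apply, Finsupp.single_apply, Fin.forall_fin_succ, -mul_eq_zero] at t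
    linear_combination t
  -- the clean form of p
  have hfin : p = C A * ((X 0) ^ 2 * X 1) + C B * ((X 1) ^ 2 * X 2) + C Cc * (X 0 * (X 2) ^ 2) := by
    rw [hpeq, hexp, h1, h2, h3, h4, h5, h6, h7]
    simp
    ring
  -- the key products vanish
  have hAB : A * B = 0 := keyAB a₁ a₂ a₃ b₁ b₂ b₃ c₁ c₂ c₃ h1 h2 h5
  have hBC : B * Cc = 0 := by
    have := keyAB b₁ b₂ b₃ c₁ c₂ c₃ a₁ a₂ a₃ h2 h3 (by linear_combination h6)
    linear_combination this
  have hAC : A * Cc = 0 := by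
    have := keyAB c₁ c₂ c₃ a₁ a₂ a₃ b₁ b₂ b₃ h3 h1 (by linear_combination h4)
    linear_combination this
  by_cases hA : A = 0
  · by_cases hB : B = 0
    · refine ⟨Cc, Or.inr (Or.inr ?_)⟩
      rw [hfin, hA, hB, smul_eq_C_mul]
      simp
    · have hC : Cc = 0 := by
        rcases mul_eq_zero.mp hBC with h | h
        · exact absurd h hB
        · exact h
      refine ⟨B, Or.inr (Or.inl ?_)⟩
      rw [hfin, hA, hC, smul_eq_C_mul]
      simp
  · have hB : B = 0 := by
      rcases mul_eq_zero.mp hAB with h | h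
      · exact absurd h hA
      · exact h
    have hC : Cc = 0 := by
      rcases mul_eq_zero.mp hAC with h | h
      · exact absurd h hA
      · exact h
    refine ⟨A, Or.inl ?_⟩
    rw [hfin, hB, hC, smul_eq_C_mul]
    simp
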